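/- arXiv:2103.00630 — 3 statements merged into one kernel-verified Lean document; each statement's English description precedes it below -/
import Mathlib

section
/- Suppose the feasible set F₃ of the SDP relaxation P3 contains a pair (W₀, Σ₀) in which both W₀ and Σ₀ are positive definite (i.e. rank(W₀) = rank(Σ₀) = m), that I is a compact interval, and that h is continuous. Then every optimal solution of P3, i.e. every pair (W̃, Σ̃) ∈ F₃ with g₃(W̃, Σ̃) = inf {g₃(W, Σ) : (W, Σ) ∈ F₃}, satisfies rank(W̃) = 1. -/
open Matrix
open scoped ComplexOrder

section Stmt0Helpers

lemma trace_outer {m : ℕ} (u : Fin m → ℂ) (A : Matrix (Fin m) (Fin m) ℂ) :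
    (vecMulVec u (star u) * A).trace = star u ⬝ᵥ A.mulVec u := by
  simp only [Matrix.trace, Matrix.diag, Matrix.mul_apply, vecMulVec_apply, dotProduct,
    Matrix.mulVec, Pi.star_apply]
  rw [Finset.sum_comm]
  simp only [Finset.mul_sum]
  exact Finset.sum_congr rfl fun j _ => Finset.sum_congr rfl fun i _ => by ring

lemma outer_mulVec {m : ℕ} (v sw x : Fin m → ℂ) :
    (vecMulVec v sw).mulVec x = (sw ⬝ᵥ x) • v := by
  ext i
  simp only [Matrix.mulVec, vecMulVec_apply, dotProduct, Pi.smul_apply, smul_eq_mul,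
    Finset.mul_sum]
  rw [Finset.sum_mul]
  exact Finset.sum_congr rfl fun j _ => by ring

lemma dot_outer {m : ℕ} (v w x : Fin m → ℂ) :
    star x ⬝ᵥ (vecMulVec v (star w)).mulVec x = (star x ⬝ᵥ v) * (star w ⬝ᵥ x) := by
  rw [outer_mulVec, dotProduct_smul, smul_eq_mul]
  ring

lemma star_dot_comm {m : ℕ} (v x : Fin m → ℂ) :
    star x ⬝ᵥ v = starRingEnd ℂ (star v ⬝ᵥ x) := by
  simp only [dotProduct, map_sum, _root_.map_mul, Pi.star_apply]
  exact Finset.sum_congr rfl fun i _ => by simp [mul_comm]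

lemma cs_dot {m : ℕ} (a b : Fin m → ℂ) :
    Complex.normSq (star a ⬝ᵥ b) ≤ (star a ⬝ᵥ a).re * (star b ⬝ᵥ b).re := by
  have h := norm_inner_le_norm (𝕜 := ℂ) ((WithLp.equiv 2 (Fin m → ℂ)).symm a)
    ((WithLp.equiv 2 (Fin m → ℂ)).symm b)
  erw [EuclideanSpace.inner_toLp_toLp, dotProduct_comm] at h
  have ha : (star a ⬝ᵥ a).re = ‖(WithLp.equiv 2 (Fin m → ℂ)).symm a‖ ^ 2 := by
    erw [norm_sq_eq_re_inner (𝕜 := ℂ), EuclideanSpace.inner_toLp_toLp, dotProduct_comm]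
    rfl
  have hb : (star b ⬝ᵥ b).re = ‖(WithLp.equiv 2 (Fin m → ℂ)).symm b‖ ^ 2 := by
    erw [norm_sq_eq_re_inner (𝕜 := ℂ), EuclideanSpace.inner_toLp_toLp, dotProduct_comm]
    rfl
  rw [ha, hb]
  calc Complex.normSq (star a ⬝ᵥ b) = ‖star a ⬝ᵥ b‖ ^ 2 := by
        rw [← Complex.sq_norm]
    _ ≤ (‖(WithLp.equiv 2 (Fin m → ℂ)).symm a‖ * ‖(WithLp.equiv 2 (Fin m → ℂ)).symm b‖) ^ 2 := by
        apply sq_le_sq' <;> nlinarith [norm_nonneg (star a ⬝ᵥ b)]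
    _ = _ := by ring

lemma psd_dot {m : ℕ} {A : Matrix (Fin m) (Fin m) ℂ} (hA : A.PosSemidef) (x : Fin m → ℂ) :
    0 ≤ (star x ⬝ᵥ A.mulVec x).re ∧ (star x ⬝ᵥ A.mulVec x).im = 0 := by
  have h := hA.dotProduct_mulVec_nonneg x
  rw [Complex.nonneg_iff] at h
  exact ⟨h.1, h.2.symm⟩

lemma psd_diag {m : ℕ} {A : Matrix (Fin m) (Fin m) ℂ} (hA : A.PosSemidef) (i : Fin m) :
    0 ≤ (A i i).re := by
  have h := (psd_dot hA (Pi.single i 1)).1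
  have e : star (Pi.single i 1 : Fin m → ℂ) ⬝ᵥ A.mulVec (Pi.single i 1) = A i i := by
    simp only [Matrix.mulVec_single, dotProduct, Pi.star_apply, Pi.single_apply, mul_one]
    rw [Finset.sum_eq_single i (fun b _ hb => by simp [hb]) (by simp)]
    simp
  rwa [e] at h

lemma psd_trace_re_nonneg {m : ℕ} {A : Matrix (Fin m) (Fin m) ℂ} (hA : A.PosSemidef) :
    0 ≤ A.trace.re := by
  rw [Matrix.trace, Complex.re_sum]
  exact Finset.sum_nonneg fun i _ => psd_diag hA i

lemma psd_trace_zero {m : ℕ} {A : Matrix (Fin m) (Fin m) ℂ} (hA : A.PosSemidef)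
    (h : A.trace.re = 0) : A = 0 := by
  have h0 := (Complex.nonneg_iff.mp hA.trace_nonneg).2
  exact hA.trace_eq_zero_iff.mp (Complex.ext (by simpa using h) (by simpa using h0.symm))

lemma outer_herm {m : ℕ} (w : Fin m → ℂ) (r : ℝ) :
    (vecMulVec ((r : ℂ) • w) (star w)).IsHermitian := by
  ext i j
  simp only [Matrix.conjTranspose_apply, vecMulVec_apply, Pi.smul_apply, Pi.star_apply,
    smul_eq_mul, star_mul', RCLike.star_def, Complex.conj_conj, Complex.conj_ofReal, _root_.map_mul]
  ring


lemma dot_star_self {m : ℕ} (y : Fin m → ℂ) :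
    star y ⬝ᵥ y = ((∑ i, Complex.normSq (y i) : ℝ) : ℂ) := by
  push_cast
  simp only [dotProduct, Pi.star_apply]
  exact Finset.sum_congr rfl fun i _ => by
    rw [RCLike.star_def, Complex.normSq_eq_conj_mul_self]

lemma dot_star_self_re {m : ℕ} (y : Fin m → ℂ) :
    (star y ⬝ᵥ y).re = ∑ i, Complex.normSq (y i) := by
  rw [dot_star_self]
  simp


end Stmt0Helpers

/-- Outer-product channel matrix `H(θ) = h(θ) h(θ)ᴴ`. -/
noncomputable def Hm {m : ℕ} (h : ℝ → Fin m → ℂ) (θ : ℝ) : Matrix (Fin m) (Fin m) ℂ :=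
  vecMulVec (h θ) (star (h θ))

/-- Objective of P3 (and of the sampled problem P4): `Tr(W) + Tr(Σ)`. -/
noncomputable def g3 {m : ℕ}
    (p : Matrix (Fin m) (Fin m) ℂ × Matrix (Fin m) (Fin m) ℂ) : ℝ :=
  p.1.trace.re + p.2.trace.re

/-- Objective of P2 (and of P1): `‖w‖² + Tr(Σ)`. -/
noncomputable def g2 {m : ℕ} (p : (Fin m → ℂ) × Matrix (Fin m) (Fin m) ℂ) : ℝ :=
  (star p.1 ⬝ᵥ p.1).re + p.2.trace.re

/-- Feasible set of the SDP relaxation P3 (for a set `I` of adversary directions);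
with a finite sample set `Θ` in place of `I` it is the feasible set `F₄(Θ)` of P4. -/
def F3 {m : ℕ} (h : ℝ → Fin m → ℂ) (γc γa σ2 P θc : ℝ) (I : Set ℝ) :
    Set (Matrix (Fin m) (Fin m) ℂ × Matrix (Fin m) (Fin m) ℂ) :=
  {p | p.1.PosSemidef ∧ p.2.PosSemidef ∧
    γc * ((Hm h θc * p.2).trace.re + σ2) ≤ (Hm h θc * p.1).trace.re ∧
    (∀ θ ∈ I, (Hm h θ * p.1).trace.re ≤ γa * ((Hm h θ * p.2).trace.re + σ2)) ∧
    (∀ i, (p.1 i i).re + (p.2 i i).re ≤ P)}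

/-- Feasible set of problem P2 (for a set `I` of adversary directions);
with the union of all adversary intervals in place of `I` it is the feasible set of P1. -/
def F2 {m : ℕ} (h : ℝ → Fin m → ℂ) (γc γa σ2 P θc : ℝ) (I : Set ℝ) :
    Set ((Fin m → ℂ) × Matrix (Fin m) (Fin m) ℂ) :=
  {p | p.2.PosSemidef ∧
    γc * ((Hm h θc * p.2).trace.re + σ2) ≤ (star p.1 ⬝ᵥ (Hm h θc).mulVec p.1).re ∧
    (∀ θ ∈ I, (star p.1 ⬝ᵥ (Hm h θ).mulVec p.1).re ≤ γa * ((Hm h θ * p.2).trace.re + σ2)) ∧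
    (∀ i, Complex.normSq (p.1 i) + (p.2 i i).re ≤ P)}

/-- If the feasible set of P3 contains a pair of positive definite
matrices, `I` is a compact interval, and `h` is continuous, then every optimal
solution `(W̃, Σ̃)` of P3 satisfies `rank W̃ = 1`. -/
theorem stmt0 {m : ℕ} (hm : 1 ≤ m) (h : ℝ → Fin m → ℂ)
    (γc γa σ2 P θc : ℝ) (I : Set ℝ)
    (hγ : γa < γc) (hγa : 0 < γa) (hσ : 0 < σ2) (hP : 0 < P)
    (a b : ℝ) (hab : a ≤ b) (hI : I = Set.Icc a b)
    (hcont : Continuous h)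
    (hfeas : ∃ p ∈ F3 h γc γa σ2 P θc I, p.1.PosDef ∧ p.2.PosDef)
    (Wt St : Matrix (Fin m) (Fin m) ℂ)
    (hmem : (Wt, St) ∈ F3 h γc γa σ2 P θc I)
    (hopt : g3 (Wt, St) = sInf (g3 '' F3 h γc γa σ2 P θc I)) :
    Wt.rank = 1 := by
  obtain ⟨hW, hS, hc, hθ, hdiag⟩ := hmem
  have hTr : ∀ (θ : ℝ) (A : Matrix (Fin m) (Fin m) ℂ),
      (Hm h θ * A).trace = star (h θ) ⬝ᵥ A.mulVec (h θ) := fun θ A => trace_outer (h θ) A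
  set u : Fin m → ℂ := h θc with hu
  set w : Fin m → ℂ := Wt.mulVec u with hwdef
  set r : ℝ := (star u ⬝ᵥ w).re with hrdef
  -- r > 0
  have hcr : γc * ((star u ⬝ᵥ St.mulVec u).re + σ2) ≤ r := by
    rw [hTr, hTr] at hc; exact hc
  have hSt0 : 0 ≤ (star u ⬝ᵥ St.mulVec u).re := (psd_dot hS u).1
  have hγc : 0 < γc := lt_trans hγa hγ
  have hr : 0 < r := lt_of_lt_of_le (by positivity) hcr
  -- c is real
  have hcre : (star u ⬝ᵥ w : ℂ) = (r : ℝ) := by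
    apply Complex.ext
    · simp [hrdef]
    · simpa using (psd_dot hW u).2
  have hw0 : w ≠ 0 := by
    intro h0
    rw [h0] at hcre
    simp only [dotProduct_zero] at hcre
    have : r = 0 := by exact_mod_cast hcre.symm
    exact absurd this (ne_of_gt hr)
  -- sqrt
  open scoped MatrixOrder in
  set S : Matrix (Fin m) (Fin m) ℂ := CFC.sqrt Wt with hSdef
  open scoped MatrixOrder in
  have hSh : Sᴴ = S := (CFC.sqrt_nonneg Wt).posSemidef.1
  open scoped MatrixOrder in
  have hSS : S * S = Wt := CFC.sqrt_mul_sqrt_self Wt hW.nonneg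
  set a : Fin m → ℂ := S.mulVec u with hadef
  have hvecS : ∀ x : Fin m → ℂ, star (S.mulVec x) = star x ᵥ* S := by
    intro x; rw [star_mulVec, hSh]
  have hq : ∀ x : Fin m → ℂ, star x ⬝ᵥ Wt.mulVec x = star (S.mulVec x) ⬝ᵥ S.mulVec x := by
    intro x
    rw [hvecS, ← dotProduct_mulVec, mulVec_mulVec, hSS]
  have hwdot : ∀ x : Fin m → ℂ, star w ⬝ᵥ x = star a ⬝ᵥ S.mulVec x := by
    intro x
    rw [hwdef, ← hSS, ← mulVec_mulVec, ← hadef, hvecS, dotProduct_mulVec]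
  have hra : r = (star a ⬝ᵥ a).re := by
    have : star u ⬝ᵥ w = star a ⬝ᵥ a := by
      rw [hwdef, ← hSS, ← mulVec_mulVec, ← hadef, dotProduct_mulVec, ← hvecS]
    rw [hrdef, this]
  -- the rank-one replacement
  set v : Fin m → ℂ := ((r⁻¹ : ℝ) : ℂ) • w with hvdef
  set W' : Matrix (Fin m) (Fin m) ℂ := vecMulVec v (star w) with hW'def
  have hform : ∀ x : Fin m → ℂ,
      star x ⬝ᵥ W'.mulVec x = ((r⁻¹ * Complex.normSq (star w ⬝ᵥ x) : ℝ) : ℂ) := by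
    intro x
    rw [hW'def, dot_outer, hvdef, dotProduct_smul, smul_eq_mul, star_dot_comm]
    rw [mul_assoc, ← Complex.normSq_eq_conj_mul_self]
    push_cast
    ring
  have hW'h : W'.IsHermitian := outer_herm w r⁻¹
  have hW'psd : W'.PosSemidef := by
    refine PosSemidef.of_dotProduct_mulVec_nonneg hW'h fun x => ?_
    rw [hform]
    rw [Complex.nonneg_iff]
    constructor
    · simp only [Complex.ofReal_re]
      exact mul_nonneg (inv_nonneg.mpr hr.le) (Complex.normSq_nonneg _)
    · simp
  -- D = Wt - W' is PSD
  have hDform : ∀ x : Fin m → ℂ, star x ⬝ᵥ (Wt - W').mulVec x =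
      (((∑ i, Complex.normSq ((S.mulVec x) i))
        - r⁻¹ * Complex.normSq (star a ⬝ᵥ S.mulVec x) : ℝ) : ℂ) := by
    intro x
    rw [Matrix.sub_mulVec, dotProduct_sub, hform x, hwdot x, hq x, dot_star_self]
    push_cast
    ring
  have hDnonneg : ∀ x : Fin m → ℂ,
      r⁻¹ * Complex.normSq (star a ⬝ᵥ S.mulVec x) ≤ ∑ i, Complex.normSq ((S.mulVec x) i) := by
    intro x
    have hcs := cs_dot a (S.mulVec x)
    rw [← hra, dot_star_self_re] at hcs
    rw [inv_mul_le_iff₀ hr]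
    linarith [hcs]
  have hD : (Wt - W').PosSemidef := by
    refine PosSemidef.of_dotProduct_mulVec_nonneg (hW.1.sub hW'h) fun x => ?_
    rw [hDform, Complex.nonneg_iff]
    constructor
    · simp only [Complex.ofReal_re]
      linarith [hDnonneg x]
    · simp
  -- trace of Hm θc W' equals r
  have hswu : star w ⬝ᵥ u = ((r : ℝ) : ℂ) := by
    rw [star_dot_comm u w, hcre, Complex.conj_ofReal]
  have hW'c : (Hm h θc * W').trace.re = r := by
    have e := hTr θc W'
    rw [← hu] at e
    rw [e, hform u, hswu]
    simp only [Complex.normSq_ofReal, Complex.ofReal_re]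
    field_simp
  -- feasibility of (W', St)
  have hfeas' : (W', St) ∈ F3 h γc γa σ2 P θc I := by
    refine ⟨hW'psd, hS, ?_, ?_, ?_⟩
    · show γc * ((Hm h θc * St).trace.re + σ2) ≤ (Hm h θc * W').trace.re
      have e := hTr θc St
      rw [← hu] at e
      rw [hW'c, e]
      exact hcr
    · intro θ hθ'
      show (Hm h θ * W').trace.re ≤ γa * ((Hm h θ * St).trace.re + σ2)
      have hmono : (star (h θ) ⬝ᵥ W'.mulVec (h θ)).re ≤ (star (h θ) ⬝ᵥ Wt.mulVec (h θ)).re := by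
        have hd := (psd_dot hD (h θ)).1
        rw [Matrix.sub_mulVec, dotProduct_sub, Complex.sub_re] at hd
        linarith
      have hθ2 := hθ θ hθ'
      rw [hTr θ Wt] at hθ2
      rw [hTr θ W']
      linarith
    · intro i
      show (W' i i).re + (St i i).re ≤ P
      have h1 := psd_diag hD i
      simp only [Matrix.sub_apply, Complex.sub_re] at h1
      have h2 := hdiag i
      linarith
  -- optimality forces Wt = W'
  have himg : g3 (W', St) ∈ g3 '' F3 h γc γa σ2 P θc I := ⟨(W', St), hfeas', rfl⟩
  have hbdd : BddBelow (g3 '' F3 h γc γa σ2 P θc I) := by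
    refine ⟨0, ?_⟩
    rintro y ⟨p, hp, rfl⟩
    exact add_nonneg (psd_trace_re_nonneg hp.1) (psd_trace_re_nonneg hp.2.1)
  have hle : g3 (Wt, St) ≤ g3 (W', St) := hopt.trans_le (csInf_le hbdd himg)
  have htr1 : Wt.trace.re ≤ W'.trace.re := by
    simp only [g3] at hle
    linarith
  have htr2 : 0 ≤ (Wt - W').trace.re := psd_trace_re_nonneg hD
  have htr3 : (Wt - W').trace.re = Wt.trace.re - W'.trace.re := by
    rw [Matrix.trace_sub, Complex.sub_re]
  have hWW : Wt = W' := sub_eq_zero.mp (psd_trace_zero hD (by linarith))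
  -- rank
  have hrank_le : Wt.rank ≤ 1 := by
    rw [hWW, hW'def, vecMulVec_eq (Fin 1)]
    refine le_trans (Matrix.rank_mul_le_left _ _) ?_
    exact le_trans (Matrix.rank_le_card_width _) (by simp)
  have hrank_pos : 0 < Wt.rank := by
    rw [Matrix.rank]
    refine Module.finrank_pos_iff_exists_ne_zero.mpr ⟨⟨w, ⟨u, by simp [Matrix.mulVecLin_apply, hwdef]⟩⟩, ?_⟩
    intro hcon
    exact hw0 (by simpa using congrArg Subtype.val hcon)
  omega
end

section
/- Let A ∈ ℂ^{m×m} be Hermitian positive definite, u ∈ ℂ^m, and λ ≥ 0 a real number, and set Y := A − λ u uᴴ. If Y is positive semidefinite and W ∈ ℂ^{m×m} is Hermitian positive semidefinite with Y · W = 0 (matrix product equal to the zero matrix), then rank(W) ≤ 1. -/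
open Matrix
open scoped ComplexOrder

/-- For Hermitian positive definite `A`, `u ∈ ℂ^m`, `λ ≥ 0`,
set `Y := A − λ u uᴴ`. If `Y` is PSD and `W` is Hermitian PSD with `Y W = 0`,
then `rank W ≤ 1`. -/
theorem stmt8 {m : ℕ} (hm : 1 ≤ m) (A : Matrix (Fin m) (Fin m) ℂ) (hA : A.PosDef)
    (u : Fin m → ℂ) (lam : ℝ) (hlam : 0 ≤ lam)
    (Y : Matrix (Fin m) (Fin m) ℂ) (hY : Y = A - (lam : ℂ) • vecMulVec u (star u))
    (hYpsd : Y.PosSemidef)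
    (W : Matrix (Fin m) (Fin m) ℂ) (hW : W.PosSemidef) (hYW : Y * W = 0) :
    W.rank ≤ 1 := by
  have hAu : IsUnit A := hA.isUnit
  have hinv : A⁻¹ * A = 1 := nonsing_inv_mul A (isUnit_iff_isUnit_det _ |>.1 hAu)
  set v : Fin m → ℂ := A⁻¹ *ᵥ u with hv
  -- every x with Y *ᵥ x = 0 lies in span {v}
  have hker : ∀ x : Fin m → ℂ, Y *ᵥ x = 0 → x ∈ Submodule.span ℂ {v} := by
    intro x hx
    have h1 : A *ᵥ x = ((lam : ℂ) * (star u ⬝ᵥ x)) • u := by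
      have := congrArg (· + ((lam : ℂ) • vecMulVec u (star u)) *ᵥ x) hx
      simp only [hY, sub_mulVec, sub_add_cancel, zero_add] at this
      rw [this]
      ext i
      simp [vecMulVec, mulVec, dotProduct, Finset.mul_sum, Finset.sum_mul]
      ring_nf
    have h2 : x = ((lam : ℂ) * (star u ⬝ᵥ x)) • v := by
      have := congrArg (fun w => A⁻¹ *ᵥ w) h1
      simpa [mulVec_mulVec, hinv, mulVec_smul] using this
    rw [h2]
    exact Submodule.smul_mem _ _ (Submodule.mem_span_singleton_self v)
  have hrange : LinearMap.range W.mulVecLin ≤ Submodule.span ℂ {v} := by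
    rintro _ ⟨x, rfl⟩
    apply hker
    have : (Y * W) *ᵥ x = 0 := by rw [hYW]; simp
    simpa [← mulVec_mulVec] using this
  calc W.rank = Module.finrank ℂ (LinearMap.range W.mulVecLin) := rfl
    _ ≤ Module.finrank ℂ (Submodule.span ℂ ({v} : Set (Fin m → ℂ))) :=
        Submodule.finrank_mono hrange
    _ ≤ 1 := by
        rcases eq_or_ne v 0 with h | h
        · rw [h, Submodule.span_zero_singleton]; simp
        · rw [finrank_span_singleton h]
end

section
/- Let Θ ⊆ I be a finite set of sampled directions. Suppose the feasible set F₄(Θ) of the sampled problem P4 contains a pair (W₀, Σ₀) in which both W₀ and Σ₀ are positive definite (i.e. rank(W₀) = rank(Σ₀) = m). Then every optimal solution of P4, i.e. every (Ŵ, Σ̂) ∈ F₄(Θ) with g₃(Ŵ, Σ̂) = inf {g₃(W, Σ) : (W, Σ) ∈ F₄(Θ)}, satisfies rank(Ŵ) = 1. -/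
open Matrix
open scoped ComplexOrder

section StmtAux

variable {n : Type*} [Fintype n]

private lemma trace_vecMulVec_mul' (a : n → ℂ) (W : Matrix n n ℂ) :
    (vecMulVec a (star a) * W).trace = star a ⬝ᵥ W *ᵥ a := by
  simp only [Matrix.trace, Matrix.diag, Matrix.mul_apply, Matrix.vecMulVec_apply,
    dotProduct, Matrix.mulVec, Pi.star_apply]
  rw [Finset.sum_comm]
  refine Finset.sum_congr rfl fun j _ => ?_
  rw [Finset.mul_sum]
  refine Finset.sum_congr rfl fun k _ => ?_
  ring

private lemma cs'' (u w : n → ℂ) :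
    Complex.normSq (star u ⬝ᵥ w) ≤ (star u ⬝ᵥ u).re * (star w ⬝ᵥ w).re := by
  have h := inner_mul_inner_self_le (𝕜 := ℂ)
    ((WithLp.equiv 2 (n → ℂ)).symm u) ((WithLp.equiv 2 (n → ℂ)).symm w)
  simp only [WithLp.equiv_symm_apply, EuclideanSpace.inner_toLp_toLp, RCLike.re_to_complex] at h
  calc Complex.normSq (star u ⬝ᵥ w) = ‖star u ⬝ᵥ w‖ * ‖star w ⬝ᵥ u‖ := by
        have : star w ⬝ᵥ u = star (star u ⬝ᵥ w) := by
          rw [← (star_dotProduct_star w (star u)), star_star]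
        rw [this, norm_star, Complex.normSq_eq_norm_sq, sq]
    _ ≤ _ := by simpa only [dotProduct_comm _ (star _)] using h

private lemma psd_cs'' {W : Matrix n n ℂ} [DecidableEq n] (hW : W.PosSemidef) (x y : n → ℂ) :
    Complex.normSq (star y ⬝ᵥ W *ᵥ x) ≤ (star y ⬝ᵥ W *ᵥ y).re * (star x ⬝ᵥ W *ᵥ x).re := by
  obtain ⟨B, hmul⟩ : ∃ B : Matrix n n ℂ, W = Bᴴ * B := by
    open scoped MatrixOrder in exact CStarAlgebra.nonneg_iff_eq_star_mul_self.mp hW.nonneg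
  have key : ∀ z u : n → ℂ, star z ⬝ᵥ W *ᵥ u = star (B *ᵥ z) ⬝ᵥ (B *ᵥ u) := by
    intro z u
    calc star z ⬝ᵥ W *ᵥ u = star z ⬝ᵥ (Bᴴ * B) *ᵥ u := by rw [hmul]
      _ = star (B *ᵥ z) ⬝ᵥ (B *ᵥ u) := by
          rw [← Matrix.mulVec_mulVec, Matrix.dotProduct_mulVec (star z), star_mulVec]
  rw [key x x, key y y, key y x]
  exact cs'' _ _

private lemma psd_re_nonneg'' {W : Matrix n n ℂ} (hW : W.PosSemidef) (x : n → ℂ) :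
    0 ≤ (star x ⬝ᵥ W *ᵥ x).re ∧ (star x ⬝ᵥ W *ᵥ x).im = 0 := by
  have h := hW.dotProduct_mulVec_nonneg x
  rw [Complex.le_def] at h
  exact ⟨h.1, h.2.symm⟩

private lemma psd_diag' {W : Matrix n n ℂ} [DecidableEq n] (hW : W.PosSemidef) (i : n) :
    0 ≤ (W i i).re := by
  have e : star (Pi.single i 1 : n → ℂ) ⬝ᵥ W *ᵥ Pi.single i 1 = W i i := by
    simp [dotProduct, Matrix.mulVec, Pi.single_apply, Finset.sum_ite_eq,
      dotProduct_single]
  have := (psd_re_nonneg'' hW (Pi.single i 1)).1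
  rwa [e] at this

private lemma psd_trace_re_nonneg' {W : Matrix n n ℂ} [DecidableEq n] (hW : W.PosSemidef) :
    0 ≤ W.trace.re := by
  rw [Matrix.trace, Complex.re_sum]
  exact Finset.sum_nonneg fun i _ => psd_diag' hW i

private lemma psd_trace_zero' {W : Matrix n n ℂ} [DecidableEq n] (hW : W.PosSemidef)
    (h0 : W.trace.re = 0) : W = 0 := by
  obtain ⟨B, rfl⟩ : ∃ B : Matrix n n ℂ, W = Bᴴ * B := by
    open scoped MatrixOrder in exact CStarAlgebra.nonneg_iff_eq_star_mul_self.mp hW.nonneg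
  have he : (Bᴴ * B).trace.re = ∑ j, ∑ i, Complex.normSq (B i j) := by
    simp only [Matrix.trace, Matrix.diag, Matrix.mul_apply, Matrix.conjTranspose_apply,
      Complex.re_sum]
    refine Finset.sum_congr rfl fun j _ => Finset.sum_congr rfl fun i _ => ?_
    simp [Complex.star_def, ← Complex.normSq_eq_conj_mul_self]
  rw [he] at h0
  have hB : B = 0 := by
    ext i j
    have h1 : ∀ j ∈ Finset.univ, (0:ℝ) ≤ ∑ i, Complex.normSq (B i j) :=
      fun j _ => Finset.sum_nonneg fun i _ => Complex.normSq_nonneg _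
    have h2 := (Finset.sum_eq_zero_iff_of_nonneg h1).mp h0 j (Finset.mem_univ j)
    have h3 := (Finset.sum_eq_zero_iff_of_nonneg
      (fun i _ => Complex.normSq_nonneg (B i j))).mp h2 i (Finset.mem_univ i)
    exact Complex.normSq_eq_zero.mp h3
  rw [hB]; simp

private lemma vecMulVec_mulVec' (u w y : n → ℂ) : vecMulVec u w *ᵥ y = (w ⬝ᵥ y) • u := by
  ext i
  simp only [Matrix.mulVec, dotProduct, Matrix.vecMulVec_apply, Pi.smul_apply,
    smul_eq_mul, Finset.sum_mul]
  exact Finset.sum_congr rfl fun j _ => by ring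

private lemma key_sub {W : Matrix n n ℂ} [DecidableEq n] (hW : W.PosSemidef) (x : n → ℂ)
    {γ : ℝ} (hγ : 0 < γ) (hc : star x ⬝ᵥ W *ᵥ x = (γ:ℂ)) :
    (∀ y, star y ⬝ᵥ ((γ:ℂ)⁻¹ • vecMulVec (W *ᵥ x) (star (W *ᵥ x))) *ᵥ y
        = ((γ⁻¹ * Complex.normSq (star y ⬝ᵥ W *ᵥ x) : ℝ) : ℂ)) ∧
      ((γ:ℂ)⁻¹ • vecMulVec (W *ᵥ x) (star (W *ᵥ x))).PosSemidef ∧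
      (W - (γ:ℂ)⁻¹ • vecMulVec (W *ᵥ x) (star (W *ᵥ x))).PosSemidef := by
  set v := W *ᵥ x with hv
  have hquad : ∀ y, star y ⬝ᵥ ((γ:ℂ)⁻¹ • vecMulVec v (star v)) *ᵥ y
      = ((γ⁻¹ * Complex.normSq (star y ⬝ᵥ v) : ℝ) : ℂ) := by
    intro y
    have h1 : star v ⬝ᵥ y = star (star y ⬝ᵥ v) := by
      have := star_dotProduct_star v (star y)
      rwa [star_star] at this
    rw [Matrix.smul_mulVec, vecMulVec_mulVec', dotProduct_smul,
      dotProduct_smul, h1]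
    simp only [smul_eq_mul, Complex.star_def, ← Complex.normSq_eq_conj_mul_self,
      Complex.ofReal_mul, Complex.ofReal_inv]
  have hherm : ((γ:ℂ)⁻¹ • vecMulVec v (star v)).IsHermitian := by
    ext i j
    simp only [Matrix.conjTranspose_apply, Matrix.smul_apply, Matrix.vecMulVec_apply,
      star_mul', star_star, Pi.star_apply, smul_eq_mul]
    rw [Complex.star_def, map_inv₀, Complex.conj_ofReal]
    ring
  refine ⟨hquad, .of_dotProduct_mulVec_nonneg hherm fun y => ?_,
    .of_dotProduct_mulVec_nonneg (hW.isHermitian.sub hherm) fun y => ?_⟩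
  · rw [hquad y]
    exact Complex.zero_le_real.mpr (mul_nonneg (inv_nonneg.mpr hγ.le) (Complex.normSq_nonneg _))
  · rw [Matrix.sub_mulVec, dotProduct_sub, hquad y]
    have hcs := psd_cs'' hW x y
    rw [hc, Complex.ofReal_re] at hcs
    have hq : star y ⬝ᵥ W *ᵥ y = (((star y ⬝ᵥ W *ᵥ y).re : ℝ) : ℂ) :=
      Complex.ext rfl (by simp [(psd_re_nonneg'' hW y).2])
    rw [hq, ← Complex.ofReal_sub]
    refine Complex.zero_le_real.mpr ?_
    have h2 : γ⁻¹ * Complex.normSq (star y ⬝ᵥ v) ≤ (star y ⬝ᵥ W *ᵥ y).re := by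
      rw [inv_mul_le_iff₀ hγ]
      calc Complex.normSq (star y ⬝ᵥ v) ≤ (star y ⬝ᵥ W *ᵥ y).re * γ := hcs
        _ = γ * (star y ⬝ᵥ W *ᵥ y).re := by ring
    linarith

end StmtAux

/-- If the feasible set `F₄(Θ)` of the sampled problem P4
(a finite sample set `Θ ⊆ I`) contains a pair of positive definite matrices,
then every optimal solution `(Ŵ, Σ̂)` of P4 satisfies `rank Ŵ = 1`. -/
theorem stmt12 {m : ℕ} (hm : 1 ≤ m) (h : ℝ → Fin m → ℂ)
    (γc γa σ2 P θc : ℝ) (I : Set ℝ)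
    (hγ : γa < γc) (hγa : 0 < γa) (hσ : 0 < σ2) (hP : 0 < P)
    (Θ : Set ℝ) (hΘfin : Θ.Finite) (hΘI : Θ ⊆ I)
    (hfeas : ∃ p ∈ F3 h γc γa σ2 P θc Θ, p.1.PosDef ∧ p.2.PosDef)
    (Wh Sh : Matrix (Fin m) (Fin m) ℂ)
    (hmem : (Wh, Sh) ∈ F3 h γc γa σ2 P θc Θ)
    (hopt : g3 (Wh, Sh) = sInf (g3 '' F3 h γc γa σ2 P θc Θ)) :
    Wh.rank = 1 := by
  obtain ⟨hW, hS, hcc, hadv, hpow⟩ := hmem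
  have hγc : 0 < γc := hγa.trans hγ
  have htr : ∀ (θ : ℝ) (M : Matrix (Fin m) (Fin m) ℂ),
      (Hm h θ * M).trace = star (h θ) ⬝ᵥ M *ᵥ (h θ) := fun θ M => trace_vecMulVec_mul' _ _
  have hγpos : 0 < (star (h θc) ⬝ᵥ Wh *ᵥ (h θc)).re := by
    have hS0 : 0 ≤ (star (h θc) ⬝ᵥ Sh *ᵥ (h θc)).re := (psd_re_nonneg'' hS (h θc)).1
    have h1 := hcc
    rw [htr θc Sh, htr θc Wh] at h1
    nlinarith
  set γ : ℝ := (star (h θc) ⬝ᵥ Wh *ᵥ (h θc)).re with hγdef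
  have hceq : star (h θc) ⬝ᵥ Wh *ᵥ (h θc) = (γ : ℂ) :=
    Complex.ext rfl (by simp [(psd_re_nonneg'' hW (h θc)).2])
  obtain ⟨hquad, hW'psd, hDpsd⟩ := key_sub hW (h θc) hγpos hceq
  set v : Fin m → ℂ := Wh *ᵥ (h θc) with hv
  set W' : Matrix (Fin m) (Fin m) ℂ := (γ:ℂ)⁻¹ • vecMulVec v (star v) with hW'def
  -- the client-direction trace of W' equals that of Wh
  have htrc' : (Hm h θc * W').trace = (γ : ℂ) := by
    have hgg : γ⁻¹ * (γ * γ) = γ := by field_simp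
    rw [htr θc W', hquad (h θc), hceq, Complex.normSq_ofReal, hgg]
  -- monotonicity of traces
  have hmono : ∀ θ : ℝ, (Hm h θ * W').trace.re ≤ (Hm h θ * Wh).trace.re := by
    intro θ
    have hsplit : (Hm h θ * Wh).trace = (Hm h θ * W').trace + (Hm h θ * (Wh - W')).trace := by
      rw [← Matrix.trace_add, ← Matrix.mul_add, add_sub_cancel]
    have hpos : 0 ≤ (Hm h θ * (Wh - W')).trace.re := by
      rw [htr θ (Wh - W')]
      exact (psd_re_nonneg'' hDpsd _).1
    have := congrArg Complex.re hsplit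
    rw [Complex.add_re] at this
    linarith
  have hmem' : (W', Sh) ∈ F3 h γc γa σ2 P θc Θ := by
    refine ⟨hW'psd, hS, ?_, ?_, ?_⟩
    · show γc * ((Hm h θc * Sh).trace.re + σ2) ≤ (Hm h θc * W').trace.re
      rw [htrc', Complex.ofReal_re]
      calc γc * ((Hm h θc * Sh).trace.re + σ2) ≤ (Hm h θc * Wh).trace.re := hcc
        _ = γ := by rw [htr θc Wh]
    · intro θ hθ
      exact le_trans (hmono θ) (hadv θ hθ)
    · intro i
      have hd := psd_diag' hDpsd i
      rw [Matrix.sub_apply, Complex.sub_re] at hd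
      have := hpow i
      show (W' i i).re + (Sh i i).re ≤ P
      linarith
  have hbdd : BddBelow (g3 '' F3 h γc γa σ2 P θc Θ) := by
    refine ⟨0, ?_⟩
    rintro z ⟨p, hp, rfl⟩
    exact add_nonneg (psd_trace_re_nonneg' hp.1) (psd_trace_re_nonneg' hp.2.1)
  have hle : Wh.trace.re ≤ W'.trace.re := by
    have h1 : sInf (g3 '' F3 h γc γa σ2 P θc Θ) ≤ g3 (W', Sh) :=
      csInf_le hbdd ⟨(W', Sh), hmem', rfl⟩
    rw [← hopt] at h1
    have h2 : Wh.trace.re + Sh.trace.re ≤ W'.trace.re + Sh.trace.re := h1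
    linarith
  have hge : 0 ≤ (Wh - W').trace.re := psd_trace_re_nonneg' hDpsd
  have h0 : (Wh - W').trace.re = 0 := by
    rw [Matrix.trace_sub, Complex.sub_re] at hge ⊢
    linarith
  have hWW : Wh = W' := sub_eq_zero.mp (psd_trace_zero' hDpsd h0)
  -- rank computation
  have hrank_le : Wh.rank ≤ 1 := by
    have hrepr : Wh = replicateCol Unit v * ((γ:ℂ)⁻¹ • replicateRow Unit (star v)) := by
      rw [hWW, hW'def, Matrix.vecMulVec_eq Unit v (star v), Matrix.mul_smul]
    calc Wh.rank ≤ (replicateCol Unit v).rank := by rw [hrepr]; exact Matrix.rank_mul_le_left _ _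
      _ ≤ Fintype.card Unit := Matrix.rank_le_card_width _
      _ = 1 := by simp
  have hrank_ne : Wh.rank ≠ 0 := by
    intro h0r
    have hbot : LinearMap.range Wh.mulVecLin = ⊥ := Submodule.finrank_eq_zero.mp h0r
    rw [LinearMap.range_eq_bot] at hbot
    have hz : Wh *ᵥ (h θc) = 0 := by
      have := congrFun (congrArg DFunLike.coe hbot) (h θc)
      simpa [Matrix.mulVecLin_apply] using this
    rw [hv, hz] at hceq
    simp only [dotProduct_zero] at hceq
    have : γ = 0 := by exact_mod_cast hceq.symm
    linarith
  omega
end
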